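/- arXiv:2402.07268 — 3 statements merged into one kernel-verified Lean document; each statement's English description precedes it below -/
import Mathlib

section
/- For all X̂, H ∈ ℝ^{n×d}, the function t ↦ f(X̂ + tH) is differentiable at t = 0 with derivative equal to 2·Tr(Hᵀ(D̃(X̂ − X) + 2(D − A)X̂)); consequently X̂ is a critical point of f if and only if (D̃ + 2(D − A))X̂ = D̃X. -/
open Matrix BigOperators Finset

/-- The paper's optimization objective (Definition 1, with the node term weighted by `D̃`):
`f(X̂) = ∑_i D̃_{ii} ‖X̂_i − X_i‖² + ∑_i ∑_j A_{ij} ‖X̂_i − X̂_j‖²`. -/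
noncomputable def objF {n d : ℕ} (A : Matrix (Fin n) (Fin n) ℝ)
    (X Xhat : Matrix (Fin n) (Fin d) ℝ) : ℝ :=
  ∑ i, ((∑ j, A i j) + 1) * (∑ k, (Xhat i k - X i k) ^ 2)
    + ∑ i, ∑ j, A i j * (∑ k, (Xhat i k - Xhat j k) ^ 2)

lemma objF_base2 (a b a' b' : ℝ) :
    HasDerivAt (fun t : ℝ => (a + t * b - (a' + t * b'))^2) (2*(a-a')*(b-b')) 0 := by
  have h : HasDerivAt (fun t : ℝ => a + t * b - (a' + t * b')) (b - b') 0 := by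
    simpa using ((((hasDerivAt_id (0:ℝ)).mul_const b).const_add a)).fun_sub
      (((hasDerivAt_id (0:ℝ)).mul_const b').const_add a')
  have := h.fun_pow 2
  simpa [pow_one] using this

lemma objF_deriv_raw {n d : ℕ} (A : Matrix (Fin n) (Fin n) ℝ)
    (X Xhat H : Matrix (Fin n) (Fin d) ℝ) :
    HasDerivAt (fun t : ℝ => objF A X (Xhat + t • H))
      ((∑ i, ((∑ j, A i j) + 1) * ∑ k, 2*(Xhat i k - X i k)*(H i k))
        + ∑ i, ∑ j, A i j * ∑ k, 2*(Xhat i k - Xhat j k)*(H i k - H j k)) 0 := by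
  simp only [objF, Matrix.add_apply, Matrix.smul_apply, smul_eq_mul]
  apply HasDerivAt.add
  · apply HasDerivAt.fun_sum
    intro i _
    exact HasDerivAt.const_mul _ (HasDerivAt.fun_sum fun k _ => by
      have h : HasDerivAt (fun t : ℝ => Xhat i k + t * H i k - X i k) (H i k) 0 := by
        simpa using (((hasDerivAt_id (0:ℝ)).mul_const (H i k)).const_add
          (Xhat i k)).sub_const (X i k)
      simpa [pow_one] using h.fun_pow 2)
  · apply HasDerivAt.fun_sum
    intro i _
    apply HasDerivAt.fun_sum
    intro j _
    exact HasDerivAt.const_mul _ (HasDerivAt.fun_sum fun k _ => by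
      simpa using objF_base2 (Xhat i k) (H i k) (Xhat j k) (H j k))

lemma objF_alg {n d : ℕ} (A : Matrix (Fin n) (Fin n) ℝ) (hA_symm : Aᵀ = A)
    (X Xhat H : Matrix (Fin n) (Fin d) ℝ) :
    (∑ i, ((∑ j, A i j) + 1) * ∑ k, 2*(Xhat i k - X i k)*(H i k))
        + ∑ i, ∑ j, A i j * ∑ k, 2*(Xhat i k - Xhat j k)*(H i k - H j k)
    = 2 * Matrix.trace (Hᵀ * ((Matrix.diagonal (fun i => ∑ j, A i j) + 1) * (Xhat - X)
        + (2:ℝ) • ((Matrix.diagonal (fun i => ∑ j, A i j) - A) * Xhat))) := by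
  have hAs : ∀ i j, A j i = A i j := by
    intro i j
    conv_rhs => rw [← hA_symm]
    rfl
  -- split the edge term
  have split : (∑ i, ∑ j, A i j * ∑ k, 2*(Xhat i k - Xhat j k)*(H i k - H j k))
      = (∑ i, ∑ j, A i j * ∑ k, 2*(Xhat i k - Xhat j k)*(H i k))
        + (∑ i, ∑ j, A i j * ∑ k, 2*(Xhat i k - Xhat j k)*(-H j k)) := by
    rw [← Finset.sum_add_distrib]
    refine Finset.sum_congr rfl fun i _ => ?_
    rw [← Finset.sum_add_distrib]
    refine Finset.sum_congr rfl fun j _ => ?_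
    rw [← mul_add, ← Finset.sum_add_distrib]
    exact congrArg _ (Finset.sum_congr rfl fun k _ => by ring)
  have hQ : (∑ i, ∑ j, A i j * ∑ k, 2*(Xhat i k - Xhat j k)*(-H j k))
      = ∑ i, ∑ j, A i j * ∑ k, 2*(Xhat i k - Xhat j k)*(H i k) := by
    rw [Finset.sum_comm]
    refine Finset.sum_congr rfl fun a _ => Finset.sum_congr rfl fun b _ => ?_
    rw [hAs a b]
    exact congrArg _ (Finset.sum_congr rfl fun k _ => by ring)
  rw [split, hQ, ← two_mul]
  -- expand the trace
  rw [show (2 : ℝ) * Matrix.trace (Hᵀ * ((Matrix.diagonal (fun i => ∑ j, A i j) + 1) * (Xhat - X)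
        + (2:ℝ) • ((Matrix.diagonal (fun i => ∑ j, A i j) - A) * Xhat)))
      = 2 * ∑ k, ∑ i, H i k * (((∑ j, A i j) * (Xhat i k - X i k) + (Xhat i k - X i k))
        + 2 * ((∑ j, A i j) * Xhat i k - ∑ j, A i j * Xhat j k)) from by
    simp only [Matrix.trace, Matrix.diag, Matrix.mul_apply, Matrix.transpose_apply,
      Matrix.add_apply, Matrix.sub_apply, Matrix.smul_apply, smul_eq_mul,
      Matrix.add_mul, Matrix.sub_mul, Matrix.one_mul, Matrix.diagonal_apply, ite_mul, zero_mul,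
      Finset.sum_ite_eq, Finset.mem_univ, if_true]]
  rw [Finset.sum_comm (γ := Fin d)]
  rw [Finset.mul_sum, Finset.mul_sum, ← Finset.sum_add_distrib]
  refine Finset.sum_congr rfl fun i _ => ?_
  have hP : (∑ j, A i j * ∑ k, 2*(Xhat i k - Xhat j k)*(H i k))
      = ∑ k, 2 * H i k * ((∑ j, A i j) * Xhat i k - ∑ j, A i j * Xhat j k) := by
    have h1 : (∑ j, A i j * ∑ k, 2*(Xhat i k - Xhat j k)*(H i k))
        = ∑ j, ∑ k, A i j * (2*(Xhat i k - Xhat j k)*(H i k)) :=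
      Finset.sum_congr rfl fun j _ => Finset.mul_sum _ _ _
    rw [h1, Finset.sum_comm]
    refine Finset.sum_congr rfl fun k _ => ?_
    have h2 : (∑ j, A i j * (2*(Xhat i k - Xhat j k)*(H i k)))
        = ∑ j, (A i j * (2*Xhat i k*H i k) - (A i j * Xhat j k) * (2*H i k)) :=
      Finset.sum_congr rfl fun j _ => by ring
    rw [h2, Finset.sum_sub_distrib, ← Finset.sum_mul, ← Finset.sum_mul]
    ring
  rw [hP, Finset.mul_sum, Finset.mul_sum, Finset.mul_sum, ← Finset.sum_add_distrib]
  refine Finset.sum_congr rfl fun k _ => ?_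
  generalize (∑ j, A i j) = S1
  generalize (∑ j, A i j * Xhat j k) = S2
  ring

/-- For all `X̂, H ∈ ℝ^{n×d}`, the function `t ↦ f(X̂ + tH)` is differentiable
at `t = 0` with derivative `2 Tr(Hᵀ(D̃(X̂ − X) + 2(D − A)X̂))`; consequently `X̂` is a critical
point of `f` if and only if `(D̃ + 2(D − A))X̂ = D̃X`. -/
theorem objF_directional_deriv_and_critical_point
    (n d : ℕ) (hn : 0 < n) (hd : 0 < d)
    (A : Matrix (Fin n) (Fin n) ℝ)
    (hA_symm : Aᵀ = A)
    (hA_diag : ∀ i, A i i = 0)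
    (hA_01 : ∀ i j, A i j = 0 ∨ A i j = 1)
    (D Dt : Matrix (Fin n) (Fin n) ℝ)
    (hD : D = Matrix.diagonal (fun i => ∑ j, A i j))
    (hDt : Dt = D + 1)
    (X : Matrix (Fin n) (Fin d) ℝ) :
    (∀ Xhat H : Matrix (Fin n) (Fin d) ℝ,
        HasDerivAt (fun t : ℝ => objF A X (Xhat + t • H))
          (2 * Matrix.trace (Hᵀ * (Dt * (Xhat - X) + (2 : ℝ) • ((D - A) * Xhat)))) 0)
      ∧ (∀ Xhat : Matrix (Fin n) (Fin d) ℝ,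
          (∀ H : Matrix (Fin n) (Fin d) ℝ,
            HasDerivAt (fun t : ℝ => objF A X (Xhat + t • H)) 0 0)
          ↔ (Dt + (2 : ℝ) • (D - A)) * Xhat = Dt * X) := by
  subst hD hDt
  have part1 : ∀ Xhat H : Matrix (Fin n) (Fin d) ℝ,
      HasDerivAt (fun t : ℝ => objF A X (Xhat + t • H))
        (2 * Matrix.trace (Hᵀ * ((Matrix.diagonal (fun i => ∑ j, A i j) + 1) * (Xhat - X)
          + (2 : ℝ) • ((Matrix.diagonal (fun i => ∑ j, A i j) - A) * Xhat)))) 0 := by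
    intro Xhat H
    have h := objF_deriv_raw A X Xhat H
    rwa [objF_alg A hA_symm X Xhat H] at h
  refine ⟨part1, fun Xhat => ?_⟩
  set M := (Matrix.diagonal (fun i => ∑ j, A i j) + 1) * (Xhat - X)
      + (2 : ℝ) • ((Matrix.diagonal (fun i => ∑ j, A i j) - A) * Xhat) with hMdef
  have hM : M = (Matrix.diagonal (fun i => ∑ j, A i j) + 1
      + (2 : ℝ) • (Matrix.diagonal (fun i => ∑ j, A i j) - A)) * Xhat
      - (Matrix.diagonal (fun i => ∑ j, A i j) + 1) * X := by
    rw [hMdef]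
    simp only [Matrix.mul_sub, Matrix.add_mul, Matrix.smul_mul]
    abel
  constructor
  · intro hcrit
    have huniq := (part1 Xhat M).unique (hcrit M)
    have htr : Matrix.trace (Mᵀ * M) = 0 := by linarith
    have hsum : ∑ k, ∑ i, (M i k)^2 = 0 := by
      rw [← htr]
      simp [Matrix.trace, Matrix.diag, Matrix.mul_apply, Matrix.transpose_apply, sq]
    have hz : ∀ i k, M i k = 0 := by
      intro i k
      have hk := (Finset.sum_eq_zero_iff_of_nonneg
        (fun k _ => Finset.sum_nonneg fun i _ => sq_nonneg (M i k))).mp hsum k (Finset.mem_univ k)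
      have hi := (Finset.sum_eq_zero_iff_of_nonneg
        (fun i _ => sq_nonneg (M i k))).mp hk i (Finset.mem_univ i)
      exact pow_eq_zero_iff (two_ne_zero) |>.mp hi
    have hM0 : M = 0 := by
      ext i k
      exact hz i k
    rw [hM] at hM0
    exact sub_eq_zero.mp hM0
  · intro heq H
    have hM0 : M = 0 := by
      rw [hM, heq, sub_self]
    have h := part1 Xhat H
    rw [← hMdef, hM0] at h
    simpa using h
end

section
/- The matrix X̂* = (D̃ + 2(D − A))^{-1} D̃ X is the unique global minimizer of the objective f: for every Ŷ ∈ ℝ^{n×d} one has f(X̂*) ≤ f(Ŷ), with equality if and only if Ŷ = X̂*. (This makes precise the closed-form optimal solution of the paper's Definition 1 optimization problem, used in Theorem 1.) -/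
open Matrix BigOperators Finset

/-- The matrix `X̂* = (D̃ + 2(D − A))⁻¹ D̃ X` is the unique global minimizer
of the objective `f`: for every `Ŷ ∈ ℝ^{n×d}` one has `f(X̂*) ≤ f(Ŷ)`, with equality iff
`Ŷ = X̂*`. -/
theorem objF_unique_global_minimizer
    (n d : ℕ) (hn : 0 < n) (hd : 0 < d)
    (A : Matrix (Fin n) (Fin n) ℝ)
    (hA_symm : Aᵀ = A)
    (hA_diag : ∀ i, A i i = 0)
    (hA_01 : ∀ i j, A i j = 0 ∨ A i j = 1)
    (D Dt : Matrix (Fin n) (Fin n) ℝ)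
    (hD : D = Matrix.diagonal (fun i => ∑ j, A i j))
    (hDt : Dt = D + 1)
    (X Xstar : Matrix (Fin n) (Fin d) ℝ)
    (hXstar : Xstar = (Dt + (2 : ℝ) • (D - A))⁻¹ * (Dt * X)) :
    ∀ Yhat : Matrix (Fin n) (Fin d) ℝ,
      objF A X Xstar ≤ objF A X Yhat
      ∧ (objF A X Xstar = objF A X Yhat ↔ Yhat = Xstar) := by
  have hAnn : ∀ i j, (0 : ℝ) ≤ A i j := by
    intro i j; rcases hA_01 i j with h | h <;> simp [h]
  have hAs : ∀ i j, A j i = A i j := by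
    intro i j
    have := congrFun (congrFun hA_symm j) i
    simpa [Matrix.transpose_apply] using this.symm
  have hdeg : ∀ i, (0 : ℝ) ≤ ∑ j, A i j := fun i =>
    Finset.sum_nonneg fun j _ => hAnn i j
  set M : Matrix (Fin n) (Fin n) ℝ := Dt + (2 : ℝ) • (D - A) with hM_def
  -- entries of M
  have hMe : ∀ i j, M i j =
      (if i = j then (∑ l, A i l) + 1 + 2 * (∑ l, A i l) else 0) - 2 * A i j := by
    intro i j
    simp only [hM_def, hDt, hD, Matrix.add_apply, Matrix.smul_apply, Matrix.sub_apply,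
      Matrix.diagonal_apply, Matrix.one_apply, smul_eq_mul]
    by_cases h : i = j <;> simp [h] <;> ring
  -- row action of M
  have hrow : ∀ (i : Fin n) (v : Fin n → ℝ), ∑ j, M i j * v j
      = (3 * (∑ l, A i l) + 1) * v i - ∑ j, 2 * A i j * v j := by
    intro i v
    have hterm : ∀ j, M i j * v j
        = (if i = j then ((∑ l, A i l) + 1 + 2 * (∑ l, A i l)) * v j else 0)
          - 2 * A i j * v j := by
      intro j
      rw [hMe]
      by_cases h : i = j <;> simp [h] <;> ring
    rw [Finset.sum_congr rfl fun j _ => hterm j, Finset.sum_sub_distrib,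
      Finset.sum_ite_eq (Finset.univ) i
        (fun j => ((∑ l, A i l) + 1 + 2 * (∑ l, A i l)) * v j)]
    simp only [Finset.mem_univ, if_true]
    ring
  -- quadratic form of M
  have hqf : ∀ x : Fin n → ℝ, x ⬝ᵥ M *ᵥ x
      = ∑ i, (x i) ^ 2 + ∑ i, ∑ j, A i j * (x i) ^ 2
        + ∑ i, ∑ j, A i j * (x i - x j) ^ 2 := by
    intro x
    have hl : x ⬝ᵥ M *ᵥ x
        = ∑ i, ((3 * (∑ l, A i l) + 1) * (x i) ^ 2 - ∑ j, 2 * A i j * x i * x j) := by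
      simp only [dotProduct, Matrix.mulVec, dotProduct]
      refine Finset.sum_congr rfl fun i _ => ?_
      rw [hrow i x, mul_sub]
      congr 1
      · ring
      · rw [Finset.mul_sum]
        exact Finset.sum_congr rfl fun j _ => by ring
    rw [hl]
    have hcol : ∑ i, ∑ j, A i j * (x j) ^ 2 = ∑ i, (∑ l, A i l) * (x i) ^ 2 := by
      rw [Finset.sum_comm]
      refine Finset.sum_congr rfl fun j _ => ?_
      rw [Finset.sum_mul]
      exact Finset.sum_congr rfl fun i _ => by rw [hAs]
    have hdiag : ∀ i, ∑ j, A i j * (x i) ^ 2 = (∑ l, A i l) * (x i) ^ 2 := by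
      intro i; rw [← Finset.sum_mul]
    have expand : ∑ i, ∑ j, A i j * (x i - x j) ^ 2
        = ∑ i, ∑ j, A i j * (x i) ^ 2 + ∑ i, ∑ j, A i j * (x j) ^ 2
          - ∑ i, ∑ j, 2 * A i j * x i * x j := by
      rw [← Finset.sum_add_distrib, ← Finset.sum_sub_distrib]
      refine Finset.sum_congr rfl fun i _ => ?_
      rw [← Finset.sum_add_distrib, ← Finset.sum_sub_distrib]
      exact Finset.sum_congr rfl fun j _ => by ring
    rw [expand, hcol]
    rw [Finset.sum_congr rfl fun i (_ : i ∈ Finset.univ) => hdiag i]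
    rw [Finset.sum_sub_distrib]
    have comb : ∑ i, ((3 * (∑ l, A i l) + 1) * (x i) ^ 2)
        = ∑ i, (x i) ^ 2 + ∑ i, (∑ l, A i l) * (x i) ^ 2
          + (∑ i, (∑ l, A i l) * (x i) ^ 2 + ∑ i, (∑ l, A i l) * (x i) ^ 2) := by
      rw [← Finset.sum_add_distrib, ← Finset.sum_add_distrib, ← Finset.sum_add_distrib]
      exact Finset.sum_congr rfl fun i _ => by ring
    linarith [comb]
  -- M is positive definite
  have hMherm : M.IsHermitian := by
    rw [Matrix.IsHermitian]
    ext i j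
    rw [Matrix.conjTranspose_apply, star_trivial, hMe i j, hMe j i]
    by_cases h : i = j
    · subst h; rfl
    · simp [h, Ne.symm h, hAs i j]
  have hMposdef : M.PosDef := by
    refine Matrix.PosDef.of_dotProduct_mulVec_pos hMherm fun x hx => ?_
    have hstar : star x = x := by ext i; simp
    rw [hstar, hqf]
    have h1 : 0 < ∑ i, (x i) ^ 2 := by
      have hne : ∃ i, x i ≠ 0 := by
        by_contra h; push_neg at h; exact hx (funext h)
      obtain ⟨i, hi⟩ := hne
      exact Finset.sum_pos' (fun i _ => sq_nonneg _)
        ⟨i, Finset.mem_univ i, by positivity⟩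
    have h2 : 0 ≤ ∑ i, ∑ j, A i j * (x i) ^ 2 :=
      Finset.sum_nonneg fun i _ => Finset.sum_nonneg fun j _ =>
        mul_nonneg (hAnn i j) (sq_nonneg _)
    have h3 : 0 ≤ ∑ i, ∑ j, A i j * (x i - x j) ^ 2 :=
      Finset.sum_nonneg fun i _ => Finset.sum_nonneg fun j _ =>
        mul_nonneg (hAnn i j) (sq_nonneg _)
    linarith
  have hMunit : IsUnit M.det :=
    (Matrix.isUnit_iff_isUnit_det M).mp hMposdef.isUnit
  -- M * Xstar = Dt * X
  have hMX : M * Xstar = Dt * X := by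
    rw [hXstar, ← Matrix.mul_assoc, Matrix.mul_nonsing_inv M hMunit, Matrix.one_mul]
  -- stationarity, entrywise
  have station : ∀ (i : Fin n) (k : Fin d),
      ((∑ j, A i j) + 1) * (Xstar i k - X i k)
        + 2 * ∑ j, A i j * (Xstar i k - Xstar j k) = 0 := by
    intro i k
    have h := congrFun (congrFun hMX i) k
    have hL : (M * Xstar) i k
        = (3 * (∑ l, A i l) + 1) * Xstar i k - ∑ j, 2 * A i j * Xstar j k := by
      rw [Matrix.mul_apply, hrow i (fun j => Xstar j k)]
    have hR : (Dt * X) i k = ((∑ j, A i j) + 1) * X i k := by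
      rw [Matrix.mul_apply]
      have hterm : ∀ j, Dt i j * X j k
          = if i = j then ((∑ l, A i l) + 1) * X j k else 0 := by
        intro j
        simp only [hDt, hD, Matrix.add_apply, Matrix.diagonal_apply, Matrix.one_apply]
        by_cases hij : i = j <;> simp [hij]
      rw [Finset.sum_congr rfl fun j _ => hterm j,
        Finset.sum_ite_eq (Finset.univ) i (fun j => ((∑ l, A i l) + 1) * X j k)]
      simp
    rw [hL, hR] at h
    have hsplit : ∑ j, A i j * (Xstar i k - Xstar j k)
        = (∑ j, A i j) * Xstar i k - ∑ j, A i j * Xstar j k := by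
      rw [Finset.sum_mul, ← Finset.sum_sub_distrib]
      exact Finset.sum_congr rfl fun j _ => by ring
    have hsum2 : ∑ j, 2 * A i j * Xstar j k = 2 * ∑ j, A i j * Xstar j k := by
      rw [Finset.mul_sum]; exact Finset.sum_congr rfl fun j _ => by ring
    rw [hsum2] at h
    rw [hsplit]
    linarith
  intro Yhat
  set Z : Fin n → Fin d → ℝ := fun i k => Yhat i k - Xstar i k with hZ_def
  set Q : ℝ := ∑ i, ((∑ j, A i j) + 1) * ∑ k, (Z i k) ^ 2
      + ∑ i, ∑ j, A i j * ∑ k, (Z i k - Z j k) ^ 2 with hQ_def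
  have sum3 : ∀ (f g h : Fin n → ℝ),
      ∑ i, (f i + g i + h i) = ∑ i, f i + ∑ i, g i + ∑ i, h i := by
    intro f g h
    rw [Finset.sum_add_distrib, Finset.sum_add_distrib]
  -- the key expansion
  have expand : objF A X Yhat = objF A X Xstar + Q := by
    have cross : ∑ i, ∑ j, A i j * ∑ k, 2 * (Z i k - Z j k) * (Xstar i k - Xstar j k)
        = ∑ i, ∑ k, (2 * Z i k) * (2 * ∑ j, A i j * (Xstar i k - Xstar j k)) := by
      have split : ∑ i, ∑ j, A i j * ∑ k, 2 * (Z i k - Z j k) * (Xstar i k - Xstar j k)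
          = ∑ i, ∑ j, ∑ k, 2 * A i j * Z i k * (Xstar i k - Xstar j k)
            - ∑ i, ∑ j, ∑ k, 2 * A i j * Z j k * (Xstar i k - Xstar j k) := by
        rw [← Finset.sum_sub_distrib]
        refine Finset.sum_congr rfl fun i _ => ?_
        rw [← Finset.sum_sub_distrib]
        refine Finset.sum_congr rfl fun j _ => ?_
        rw [Finset.mul_sum, ← Finset.sum_sub_distrib]
        exact Finset.sum_congr rfl fun k _ => by ring
      have swap : ∑ i, ∑ j, ∑ k, 2 * A i j * Z j k * (Xstar i k - Xstar j k)
          = - ∑ i, ∑ j, ∑ k, 2 * A i j * Z i k * (Xstar i k - Xstar j k) := by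
        rw [Finset.sum_comm, ← Finset.sum_neg_distrib]
        refine Finset.sum_congr rfl fun j _ => ?_
        rw [← Finset.sum_neg_distrib]
        refine Finset.sum_congr rfl fun i _ => ?_
        rw [← Finset.sum_neg_distrib]
        refine Finset.sum_congr rfl fun k _ => ?_
        rw [hAs i j]
        ring
      rw [split, swap, sub_neg_eq_add]
      have hdouble : ∑ i, ∑ j, ∑ k, 2 * A i j * Z i k * (Xstar i k - Xstar j k)
            + ∑ i, ∑ j, ∑ k, 2 * A i j * Z i k * (Xstar i k - Xstar j k)
          = ∑ i, ∑ j, ∑ k, 4 * A i j * Z i k * (Xstar i k - Xstar j k) := by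
        rw [← Finset.sum_add_distrib]
        refine Finset.sum_congr rfl fun i _ => ?_
        rw [← Finset.sum_add_distrib]
        refine Finset.sum_congr rfl fun j _ => ?_
        rw [← Finset.sum_add_distrib]
        exact Finset.sum_congr rfl fun k _ => by ring
      rw [hdouble]
      refine Finset.sum_congr rfl fun i _ => ?_
      rw [Finset.sum_comm]
      refine Finset.sum_congr rfl fun k _ => ?_
      simp only [Finset.mul_sum]
      exact Finset.sum_congr rfl fun j _ => by ring
    -- per-term expansions
    have t1 : ∀ i : Fin n, ((∑ j, A i j) + 1) * ∑ k, (Yhat i k - X i k) ^ 2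
        = ((∑ j, A i j) + 1) * ∑ k, (Xstar i k - X i k) ^ 2
          + ((∑ j, A i j) + 1) * ∑ k, (Z i k) ^ 2
          + ∑ k, (2 * Z i k) * (((∑ j, A i j) + 1) * (Xstar i k - X i k)) := by
      intro i
      rw [Finset.mul_sum, Finset.mul_sum, Finset.mul_sum,
        ← Finset.sum_add_distrib, ← Finset.sum_add_distrib]
      refine Finset.sum_congr rfl fun k _ => ?_
      simp only [hZ_def]
      ring
    have t2 : ∀ i j : Fin n, A i j * ∑ k, (Yhat i k - Yhat j k) ^ 2
        = A i j * ∑ k, (Xstar i k - Xstar j k) ^ 2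
          + A i j * ∑ k, (Z i k - Z j k) ^ 2
          + A i j * ∑ k, 2 * (Z i k - Z j k) * (Xstar i k - Xstar j k) := by
      intro i j
      rw [Finset.mul_sum, Finset.mul_sum, Finset.mul_sum, Finset.mul_sum,
        ← Finset.sum_add_distrib, ← Finset.sum_add_distrib]
      refine Finset.sum_congr rfl fun k _ => ?_
      simp only [hZ_def]
      ring
    have hstat : ∑ i, ∑ k, (2 * Z i k) * (((∑ j, A i j) + 1) * (Xstar i k - X i k))
          + ∑ i, ∑ k, (2 * Z i k) * (2 * ∑ j, A i j * (Xstar i k - Xstar j k)) = 0 := by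
      rw [← Finset.sum_add_distrib]
      refine Finset.sum_eq_zero fun i _ => ?_
      rw [← Finset.sum_add_distrib]
      refine Finset.sum_eq_zero fun k _ => ?_
      linear_combination (2 * Z i k) * station i k
    simp only [objF]
    calc ∑ i, ((∑ j, A i j) + 1) * ∑ k, (Yhat i k - X i k) ^ 2
          + ∑ i, ∑ j, A i j * ∑ k, (Yhat i k - Yhat j k) ^ 2
        = (∑ i, (((∑ j, A i j) + 1) * ∑ k, (Xstar i k - X i k) ^ 2
            + ((∑ j, A i j) + 1) * ∑ k, (Z i k) ^ 2
            + ∑ k, (2 * Z i k) * (((∑ j, A i j) + 1) * (Xstar i k - X i k))))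
          + ∑ i, (∑ j, A i j * ∑ k, (Xstar i k - Xstar j k) ^ 2
            + ∑ j, A i j * ∑ k, (Z i k - Z j k) ^ 2
            + ∑ j, A i j * ∑ k, 2 * (Z i k - Z j k) * (Xstar i k - Xstar j k)) := by
          congr 1
          · exact Finset.sum_congr rfl fun i _ => t1 i
          · refine Finset.sum_congr rfl fun i _ => ?_
            rw [← Finset.sum_add_distrib, ← Finset.sum_add_distrib]
            exact Finset.sum_congr rfl fun j _ => t2 i j
      _ = (∑ i, ((∑ j, A i j) + 1) * ∑ k, (Xstar i k - X i k) ^ 2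
            + ∑ i, ((∑ j, A i j) + 1) * ∑ k, (Z i k) ^ 2
            + ∑ i, ∑ k, (2 * Z i k) * (((∑ j, A i j) + 1) * (Xstar i k - X i k)))
          + (∑ i, ∑ j, A i j * ∑ k, (Xstar i k - Xstar j k) ^ 2
            + ∑ i, ∑ j, A i j * ∑ k, (Z i k - Z j k) ^ 2
            + ∑ i, ∑ j, A i j * ∑ k, 2 * (Z i k - Z j k) * (Xstar i k - Xstar j k)) := by
          rw [sum3, sum3]
      _ = objF A X Xstar + Q := by
          rw [cross]
          simp only [objF, hQ_def]
          linarith [hstat]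
  -- nonnegativity of Q and Q = 0 iff Z = 0
  have hS_nonneg : (0:ℝ) ≤ ∑ i, ∑ k, (Z i k) ^ 2 :=
    Finset.sum_nonneg fun i _ => Finset.sum_nonneg fun k _ => sq_nonneg _
  have hQ1 : ∑ i, ∑ k, (Z i k) ^ 2 ≤ ∑ i, ((∑ j, A i j) + 1) * ∑ k, (Z i k) ^ 2 := by
    refine Finset.sum_le_sum fun i _ => ?_
    have h1 : (1:ℝ) ≤ (∑ j, A i j) + 1 := by linarith [hdeg i]
    have h2 : (0:ℝ) ≤ ∑ k, (Z i k) ^ 2 := Finset.sum_nonneg fun k _ => sq_nonneg _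
    exact le_mul_of_one_le_left h2 h1
  have hQ2 : (0:ℝ) ≤ ∑ i, ∑ j, A i j * ∑ k, (Z i k - Z j k) ^ 2 :=
    Finset.sum_nonneg fun i _ => Finset.sum_nonneg fun j _ =>
      mul_nonneg (hAnn i j) (Finset.sum_nonneg fun k _ => sq_nonneg _)
  have hQ_nonneg : 0 ≤ Q := by rw [hQ_def]; linarith
  constructor
  · rw [expand]; linarith
  · constructor
    · intro heq
      have hQ0 : Q = 0 := by rw [expand] at heq; linarith
      have hZ0 : ∑ i, ∑ k, (Z i k) ^ 2 = 0 := by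
        rw [hQ_def] at hQ0
        linarith
      ext i k
      have hrowzero : ∀ i ∈ Finset.univ, ∑ k, (Z i k) ^ 2 = 0 := by
        intro i _
        have := Finset.sum_eq_zero_iff_of_nonneg
          (fun i (_ : i ∈ Finset.univ) =>
            Finset.sum_nonneg fun k _ => sq_nonneg (Z i k)) |>.mp hZ0
        exact this i (Finset.mem_univ i)
      have hik : (Z i k) ^ 2 = 0 := by
        have := Finset.sum_eq_zero_iff_of_nonneg
          (fun k (_ : k ∈ Finset.univ) => sq_nonneg (Z i k)) |>.mp
          (hrowzero i (Finset.mem_univ i))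
        exact this k (Finset.mem_univ k)
      have hzik : Z i k = 0 := sq_eq_zero_iff.mp hik
      simpa [hZ_def, sub_eq_zero] using hzik
    · intro hY
      have hQ0 : Q = 0 := by
        rw [hQ_def]
        have hZe : ∀ i k, Z i k = 0 := by
          intro i k; simp [hZ_def, hY]
        have h1 : ∑ i, ((∑ j, A i j) + 1) * ∑ k, (Z i k) ^ 2 = 0 :=
          Finset.sum_eq_zero fun i _ => by simp [hZe]
        have h2 : ∑ i, ∑ j, A i j * ∑ k, (Z i k - Z j k) ^ 2 = 0 :=
          Finset.sum_eq_zero fun i _ => Finset.sum_eq_zero fun j _ => by simp [hZe]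
        rw [h1, h2, add_zero]
      rw [expand, hQ0, add_zero]
end

section
/- Let P ∈ ℝ^{n×n} be symmetric with nonnegative entries and every row sum equal to 1. Then D̃ + I − P is positive definite, the matrix I − D̃^{-1}(P − I) is invertible, and the unique global minimizer of the weighted objective f_P is X̂* = (I − D̃^{-1}(P − I))^{-1} X, i.e. for every Ŷ ∈ ℝ^{n×d}, f_P(X̂*) ≤ f_P(Ŷ) with equality iff Ŷ = X̂*. (This is the closed-form optimal solution derived in Appendix D.) -/
open Matrix BigOperators Finset

/-- The weighted objective of Appendix D with a symmetric row-stochastic attention-weight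
matrix `P`: `f_P(X̂) = ∑_i D̃_{ii} ‖X̂_i − X_i‖² + (1/2) ∑_i ∑_j P_{ij} ‖X̂_i − X̂_j‖²`. -/
noncomputable def objFP {n d : ℕ} (A P : Matrix (Fin n) (Fin n) ℝ)
    (X Xhat : Matrix (Fin n) (Fin d) ℝ) : ℝ :=
  ∑ i, ((∑ j, A i j) + 1) * (∑ k, (Xhat i k - X i k) ^ 2)
    + (1 / 2) * ∑ i, ∑ j, P i j * (∑ k, (Xhat i k - Xhat j k) ^ 2)

/-- quadratic form of `diagonal dt + 1 - P`. -/
lemma quadform_eq {n : ℕ} (dt : Fin n → ℝ) (P : Matrix (Fin n) (Fin n) ℝ) (z : Fin n → ℝ) :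
    z ⬝ᵥ ((Matrix.diagonal dt + 1 - P) *ᵥ z)
      = ∑ i, dt i * z i ^ 2 + ((∑ i, z i ^ 2) - ∑ i, ∑ j, P i j * (z i * z j)) := by
  have h1 : ∀ i, ((Matrix.diagonal dt + 1 - P) *ᵥ z) i
      = dt i * z i + z i - ∑ j, P i j * z j := by
    intro i
    simp [Matrix.mulVec, dotProduct, Matrix.sub_apply, Matrix.add_apply,
      Matrix.diagonal_apply, Matrix.one_apply, ite_mul, sub_mul, add_mul,
      Finset.sum_sub_distrib, Finset.sum_add_distrib]
  simp only [dotProduct, h1]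
  have h2 : ∀ i, z i * (dt i * z i + z i - ∑ j, P i j * z j)
      = dt i * z i ^ 2 + z i ^ 2 - ∑ j, P i j * (z i * z j) := by
    intro i
    rw [mul_sub, mul_add, Finset.mul_sum]
    have : ∑ j, z i * (P i j * z j) = ∑ j, P i j * (z i * z j) :=
      Finset.sum_congr rfl fun j _ => by ring
    rw [this]; ring
  simp only [h2]
  rw [Finset.sum_sub_distrib, Finset.sum_add_distrib]
  ring

/-- pair-interaction form. -/
lemma pairform_eq {n : ℕ} (P : Matrix (Fin n) (Fin n) ℝ)
    (hrow : ∀ i, ∑ j, P i j = 1) (hcol : ∀ j, ∑ i, P i j = 1) (z : Fin n → ℝ) :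
    (1 / 2) * ∑ i, ∑ j, P i j * (z i - z j) ^ 2
      = (∑ i, z i ^ 2) - ∑ i, ∑ j, P i j * (z i * z j) := by
  have hA : ∑ i, ∑ j, P i j * z i ^ 2 = ∑ i, z i ^ 2 := by
    refine Finset.sum_congr rfl fun i _ => ?_
    rw [← Finset.sum_mul, hrow, one_mul]
  have hB : ∑ i, ∑ j, P i j * z j ^ 2 = ∑ i, z i ^ 2 := by
    rw [Finset.sum_comm]
    refine Finset.sum_congr rfl fun j _ => ?_
    rw [← Finset.sum_mul, hcol, one_mul]
  have e1 : ∑ i, ∑ j, P i j * (z i - z j) ^ 2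
      = ∑ i, ∑ j, (P i j * z i ^ 2 + P i j * z j ^ 2 - 2 * (P i j * (z i * z j))) :=
    Finset.sum_congr rfl fun i _ => Finset.sum_congr rfl fun j _ => by ring
  rw [e1]
  simp only [Finset.sum_sub_distrib, Finset.sum_add_distrib, ← Finset.mul_sum]
  rw [hA, hB]
  ring

/-- completion of squares per column. -/
lemma colkey {n : ℕ} (dt : Fin n → ℝ) (P : Matrix (Fin n) (Fin n) ℝ)
    (hsym : ∀ i j, P i j = P j i)
    (hrow : ∀ i, ∑ j, P i j = 1) (hcol : ∀ j, ∑ i, P i j = 1)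
    (x s y : Fin n → ℝ)
    (hc : ∀ i, dt i * (s i - x i) + s i - ∑ j, P i j * s j = 0) :
    ∑ i, dt i * (y i - x i) ^ 2 + (1 / 2) * ∑ i, ∑ j, P i j * (y i - y j) ^ 2
      = ∑ i, dt i * (s i - x i) ^ 2 + (1 / 2) * ∑ i, ∑ j, P i j * (s i - s j) ^ 2
        + (fun i => y i - s i) ⬝ᵥ ((Matrix.diagonal dt + 1 - P) *ᵥ fun i => y i - s i) := by
  rw [quadform_eq, pairform_eq P hrow hcol y, pairform_eq P hrow hcol s]
  -- abbreviations
  have r1 : ∑ i, dt i * (y i - x i) ^ 2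
      = ∑ i, dt i * (s i - x i) ^ 2 + ∑ i, dt i * (y i - s i) ^ 2
        + 2 * ∑ i, dt i * (s i - x i) * (y i - s i) := by
    rw [Finset.mul_sum, ← Finset.sum_add_distrib, ← Finset.sum_add_distrib]
    exact Finset.sum_congr rfl fun i _ => by ring
  have r2 : ∑ i, y i ^ 2
      = ∑ i, s i ^ 2 + ∑ i, (y i - s i) ^ 2 + 2 * ∑ i, s i * (y i - s i) := by
    rw [Finset.mul_sum, ← Finset.sum_add_distrib, ← Finset.sum_add_distrib]
    exact Finset.sum_congr rfl fun i _ => by ring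
  have r3 : ∑ i, ∑ j, P i j * ((y i - s i) * (y j - s j))
      = ∑ i, ∑ j, P i j * (y i * y j) - ∑ i, ∑ j, P i j * (y i * s j)
        - ∑ i, ∑ j, P i j * (s i * y j) + ∑ i, ∑ j, P i j * (s i * s j) := by
    have e : ∀ i j, P i j * ((y i - s i) * (y j - s j))
        = P i j * (y i * y j) - P i j * (y i * s j)
          - (P i j * (s i * y j) - P i j * (s i * s j)) := fun i j => by ring
    simp only [e, Finset.sum_sub_distrib]
    ring
  have r4 : ∑ i, ∑ j, P i j * (s i * y j) = ∑ i, ∑ j, P i j * (y i * s j) := by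
    rw [Finset.sum_comm]
    exact Finset.sum_congr rfl fun i _ => Finset.sum_congr rfl fun j _ => by
      rw [hsym j i]; ring
  have r5 : ∑ i, (y i - s i) * (∑ j, P i j * s j)
      = ∑ i, ∑ j, P i j * (y i * s j) - ∑ i, ∑ j, P i j * (s i * s j) := by
    have e : ∀ i, (y i - s i) * (∑ j, P i j * s j)
        = ∑ j, (P i j * (y i * s j) - P i j * (s i * s j)) := by
      intro i
      rw [Finset.mul_sum]
      exact Finset.sum_congr rfl fun j _ => by ring
    simp only [e, Finset.sum_sub_distrib]
  have r6 : ∑ i, dt i * (s i - x i) * (y i - s i) + ∑ i, s i * (y i - s i)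
      - ∑ i, (y i - s i) * (∑ j, P i j * s j) = 0 := by
    rw [← Finset.sum_add_distrib, ← Finset.sum_sub_distrib]
    have e : ∀ i, dt i * (s i - x i) * (y i - s i) + s i * (y i - s i)
        - (y i - s i) * (∑ j, P i j * s j)
        = (y i - s i) * (dt i * (s i - x i) + s i - ∑ j, P i j * s j) := fun i => by ring
    simp only [e]
    calc ∑ i, (y i - s i) * (dt i * (s i - x i) + s i - ∑ j, P i j * s j)
        = ∑ i, (y i - s i) * 0 := Finset.sum_congr rfl fun i _ => by rw [hc i]
      _ = 0 := by simp
  linarith [r1, r2, r3, r4, r5, r6]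

/-- Let `P ∈ ℝ^{n×n}` be symmetric with nonnegative entries and every row
sum equal to 1. Then `D̃ + I − P` is positive definite, the matrix `I − D̃⁻¹(P − I)` is
invertible, and the unique global minimizer of the weighted objective `f_P` is
`X̂* = (I − D̃⁻¹(P − I))⁻¹ X`: for every `Ŷ`, `f_P(X̂*) ≤ f_P(Ŷ)` with equality iff `Ŷ = X̂*`. -/
theorem objFP_closed_form_unique_minimizer
    (n d : ℕ) (hn : 0 < n) (hd : 0 < d)
    (A : Matrix (Fin n) (Fin n) ℝ)
    (hA_symm : Aᵀ = A)
    (hA_diag : ∀ i, A i i = 0)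
    (hA_01 : ∀ i j, A i j = 0 ∨ A i j = 1)
    (D Dt : Matrix (Fin n) (Fin n) ℝ)
    (hD : D = Matrix.diagonal (fun i => ∑ j, A i j))
    (hDt : Dt = D + 1)
    (P : Matrix (Fin n) (Fin n) ℝ)
    (hP_symm : Pᵀ = P)
    (hP_nonneg : ∀ i j, 0 ≤ P i j)
    (hP_row : ∀ i, ∑ j, P i j = 1)
    (X Xstar : Matrix (Fin n) (Fin d) ℝ)
    (hXstar : Xstar = (1 - Dt⁻¹ * (P - 1))⁻¹ * X) :
    (∀ x : Fin n → ℝ, x ≠ 0 → 0 < x ⬝ᵥ ((Dt + 1 - P) *ᵥ x))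
      ∧ IsUnit (1 - Dt⁻¹ * (P - 1))
      ∧ (∀ Yhat : Matrix (Fin n) (Fin d) ℝ,
          objFP A P X Xstar ≤ objFP A P X Yhat
          ∧ (objFP A P X Xstar = objFP A P X Yhat ↔ Yhat = Xstar)) := by
  -- setup
  set dt : Fin n → ℝ := fun i => (∑ j, A i j) + 1 with hdt
  have hA_nonneg : ∀ i j, 0 ≤ A i j := by
    intro i j; rcases hA_01 i j with h | h <;> rw [h] <;> norm_num
  have hdt_pos : ∀ i, 0 < dt i := by
    intro i
    have : 0 ≤ ∑ j, A i j := Finset.sum_nonneg fun j _ => hA_nonneg i j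
    simp only [hdt]; linarith
  have hDt_diag : Dt = Matrix.diagonal dt := by
    rw [hDt, hD, ← Matrix.diagonal_one, Matrix.diagonal_add]
  have hPsym' : ∀ i j, P i j = P j i := fun i j =>
    (congrFun (congrFun hP_symm i) j).symm
  have hP_col : ∀ j, ∑ i, P i j = 1 := by
    intro j
    calc ∑ i, P i j = ∑ i, P j i := Finset.sum_congr rfl fun i _ => hPsym' i j
      _ = 1 := hP_row j
  -- Part 1 : positive definiteness
  have part1 : ∀ x : Fin n → ℝ, x ≠ 0 → 0 < x ⬝ᵥ ((Dt + 1 - P) *ᵥ x) := by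
    intro x hx
    rw [hDt_diag, quadform_eq]
    have h2 : 0 ≤ (∑ i, x i ^ 2) - ∑ i, ∑ j, P i j * (x i * x j) := by
      rw [← pairform_eq P hP_row hP_col x]
      have : 0 ≤ ∑ i, ∑ j, P i j * (x i - x j) ^ 2 :=
        Finset.sum_nonneg fun i _ => Finset.sum_nonneg fun j _ =>
          mul_nonneg (hP_nonneg i j) (sq_nonneg _)
      linarith
    have h1 : 0 < ∑ i, dt i * x i ^ 2 := by
      obtain ⟨i, hi⟩ := Function.ne_iff.mp hx
      have hterm : 0 < dt i * x i ^ 2 := by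
        have hi' : x i ≠ 0 := hi
        have hx2 : 0 < x i ^ 2 := by positivity
        exact mul_pos (hdt_pos i) hx2
      have : dt i * x i ^ 2 ≤ ∑ i, dt i * x i ^ 2 :=
        Finset.single_le_sum (fun j _ => mul_nonneg (hdt_pos j).le (sq_nonneg _))
          (Finset.mem_univ i)
      linarith
    linarith
  refine ⟨part1, ?_⟩
  -- invertibility facts
  have hDt_detU : IsUnit Dt.det := by
    rw [hDt_diag, Matrix.det_diagonal]
    exact (Finset.prod_pos fun i _ => hdt_pos i).ne'.isUnit
  have hM_herm : (Dt + 1 - P).IsHermitian := by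
    rw [hDt_diag]
    show _ᴴ = _
    ext i j
    simp only [Matrix.conjTranspose_apply, Matrix.sub_apply, Matrix.add_apply,
      Matrix.diagonal_apply, Matrix.one_apply, star_trivial]
    rcases eq_or_ne j i with h | h
    · subst h; simp
    · simp [h, Ne.symm h, hPsym' i j]
  have hM_pd : (Dt + 1 - P).PosDef := by
    refine Matrix.PosDef.of_dotProduct_mulVec_pos hM_herm fun x hx => ?_
    have hs : star x = x := funext fun i => rfl
    rw [hs]
    exact part1 x hx
  have hM_detU : IsUnit (Dt + 1 - P).det := hM_pd.det_pos.ne'.isUnit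
  have hDtinv_mul : Dt⁻¹ * Dt = 1 := Matrix.nonsing_inv_mul Dt hDt_detU
  have key_eq : 1 - Dt⁻¹ * (P - 1) = Dt⁻¹ * (Dt + 1 - P) := by
    rw [show Dt⁻¹ * (Dt + 1 - P) = Dt⁻¹ * Dt + Dt⁻¹ - Dt⁻¹ * P by noncomm_ring, hDtinv_mul]
    noncomm_ring
  have hDtinv_detU : IsUnit Dt⁻¹.det := by
    rw [Matrix.det_nonsing_inv, isUnit_ringInverse]
    exact hDt_detU
  have part2 : IsUnit (1 - Dt⁻¹ * (P - 1)) := by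
    rw [key_eq]
    exact ((Matrix.isUnit_iff_isUnit_det _).mpr hDtinv_detU).mul
      ((Matrix.isUnit_iff_isUnit_det _).mpr hM_detU)
  refine ⟨part2, ?_⟩
  -- the minimizer equation
  have hXstar_eq : (Dt + 1 - P) * Xstar = Dt * X := by
    rw [hXstar, key_eq, Matrix.mul_inv_rev, Matrix.nonsing_inv_nonsing_inv Dt hDt_detU,
      ← Matrix.mul_assoc, ← Matrix.mul_assoc, Matrix.mul_nonsing_inv _ hM_detU, Matrix.one_mul]
  have hstar_entry : ∀ (k : Fin d) (i : Fin n),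
      dt i * (Xstar i k - X i k) + Xstar i k - ∑ j, P i j * Xstar j k = 0 := by
    intro k i
    have h : ∑ j, (Dt + 1 - P) i j * Xstar j k = ∑ j, Dt i j * X j k := by
      rw [← Matrix.mul_apply, ← Matrix.mul_apply, hXstar_eq]
    rw [hDt_diag] at h
    simp only [Matrix.sub_apply, Matrix.add_apply, Matrix.diagonal_apply, Matrix.one_apply,
      ite_mul, sub_mul, add_mul, one_mul, zero_mul, Finset.sum_sub_distrib,
      Finset.sum_add_distrib, Finset.sum_ite_eq, Finset.mem_univ, if_true] at h
    linarith [h]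
  -- column decomposition of the objective
  have col_decomp : ∀ Y : Matrix (Fin n) (Fin d) ℝ,
      objFP A P X Y = ∑ k, ((∑ i, dt i * (Y i k - X i k) ^ 2)
        + (1 / 2) * ∑ i, ∑ j, P i j * (Y i k - Y j k) ^ 2) := by
    intro Y
    unfold objFP
    have hdt' : ∀ i, (∑ j, A i j) + 1 = dt i := fun i => rfl
    simp only [hdt']
    have e1 : ∑ i, dt i * (∑ k, (Y i k - X i k) ^ 2)
        = ∑ k, ∑ i, dt i * (Y i k - X i k) ^ 2 := by
      simp only [Finset.mul_sum]
      exact Finset.sum_comm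
    have e2 : ∑ i, ∑ j, P i j * (∑ k, (Y i k - Y j k) ^ 2)
        = ∑ k, ∑ i, ∑ j, P i j * (Y i k - Y j k) ^ 2 := by
      simp only [Finset.mul_sum]
      rw [show (∑ i, ∑ j, ∑ k, P i j * (Y i k - Y j k) ^ 2)
          = ∑ i, ∑ k, ∑ j, P i j * (Y i k - Y j k) ^ 2 from
        Finset.sum_congr rfl fun i _ => Finset.sum_comm]
      exact Finset.sum_comm
    rw [e1, e2, Finset.mul_sum, ← Finset.sum_add_distrib]
  -- quadratic expansion around Xstar
  have obj_exp : ∀ Y : Matrix (Fin n) (Fin d) ℝ,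
      objFP A P X Y = objFP A P X Xstar
        + ∑ k, (fun i => Y i k - Xstar i k) ⬝ᵥ
            ((Matrix.diagonal dt + 1 - P) *ᵥ fun i => Y i k - Xstar i k) := by
    intro Y
    rw [col_decomp Y, col_decomp Xstar, ← Finset.sum_add_distrib]
    refine Finset.sum_congr rfl fun k _ => ?_
    exact colkey dt P hPsym' hP_row hP_col (fun i => X i k) (fun i => Xstar i k)
      (fun i => Y i k) (hstar_entry k)
  -- nonnegativity of each quadratic term
  have term_nonneg : ∀ z : Fin n → ℝ,
      0 ≤ z ⬝ᵥ ((Matrix.diagonal dt + 1 - P) *ᵥ z) := by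
    intro z
    by_cases hz : z = 0
    · rw [hz]; simp
    · have := part1 z hz
      rw [hDt_diag] at this
      linarith
  intro Yhat
  by_cases hY : Yhat = Xstar
  · subst hY
    exact ⟨le_refl _, ⟨fun _ => rfl, fun _ => rfl⟩⟩
  · have hpos : 0 < ∑ k, (fun i => Yhat i k - Xstar i k) ⬝ᵥ
        ((Matrix.diagonal dt + 1 - P) *ᵥ fun i => Yhat i k - Xstar i k) := by
      have hne : ∃ i k, Yhat i k ≠ Xstar i k := by
        by_contra hcon
        push_neg at hcon
        exact hY (by ext i k; exact hcon i k)
      obtain ⟨i, k, hik⟩ := hne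
      refine Finset.sum_pos' (fun k _ => term_nonneg _) ⟨k, Finset.mem_univ k, ?_⟩
      have hz : (fun i => Yhat i k - Xstar i k) ≠ 0 := by
        intro h0
        exact hik (by have := congrFun h0 i; simpa [sub_eq_zero] using this)
      have := part1 _ hz
      rw [hDt_diag] at this
      exact this
    have hlt : objFP A P X Xstar < objFP A P X Yhat := by
      rw [obj_exp Yhat]; linarith
    exact ⟨hlt.le, ⟨fun h => absurd h hlt.ne, fun h => absurd h hY⟩⟩
end
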